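/- Let ω be a positive linear functional on A with Gel'fand ideal J_ω, and let H_ω := A/J_ω with canonical projection f ↦ Ψ_f. Then ⟨Ψ_f, Ψ_g⟩ := ω(f̄*g) is a well-defined map on H_ω × H_ω (independent of the chosen representatives), is conjugate-symmetric, ℂ((λ))-linear in the second argument, and positive definite: ⟨Ψ_f, Ψ_f⟩ ∈ ℝ((λ)), ⟨Ψ_f, Ψ_f⟩ ≥ 0, and ⟨Ψ_f, Ψ_f⟩ = 0 iff Ψ_f = 0. -/

import Mathlib

/-- Coefficientwise complex conjugation on `ℂ((λ))`. -/
noncomputable def conjL (x : LaurentSeries ℂ) : LaurentSeries ℂ where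
  coeff := fun m => (starRingEnd ℂ) (x.coeff m)
  isPWO_support' := by
    refine x.isPWO_support.mono ?_
    intro m hm
    simp only [Function.mem_support, ne_eq, map_eq_zero] at hm ⊢
    exact hm

/-- An element of `ℂ((λ))` lies in `ℝ((λ))` and is `≥ 0` there: all coefficients are
real, and either it is `0` or the coefficient of the lowest nonvanishing power of `λ`
is positive. -/
noncomputable def IsRealNonneg (x : LaurentSeries ℂ) : Prop :=
  (∀ m, (x.coeff m).im = 0) ∧ (x = 0 ∨ 0 < (x.coeff x.order).re)

namespace GNSAux

open HahnSeries

lemma conjL_coeff (x : LaurentSeries ℂ) (m : ℤ) :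
    (conjL x).coeff m = (starRingEnd ℂ) (x.coeff m) := rfl

lemma conjL_zero : conjL 0 = 0 := by
  apply HahnSeries.coeff_injective
  funext m
  simp [conjL_coeff]

lemma conjL_conjL (x : LaurentSeries ℂ) : conjL (conjL x) = x := by
  apply HahnSeries.coeff_injective
  funext m
  simp [conjL_coeff]

lemma conjL_ne_zero {x : LaurentSeries ℂ} (hx : x ≠ 0) : conjL x ≠ 0 := by
  intro h
  apply hx
  rw [← conjL_conjL x, h, conjL_zero]

lemma conjL_neg (x : LaurentSeries ℂ) : conjL (-x) = -conjL x := by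
  apply HahnSeries.coeff_injective
  funext m
  simp [conjL_coeff, HahnSeries.coeff_neg]

lemma conjL_one : conjL 1 = 1 := by
  apply HahnSeries.coeff_injective
  funext m
  simp [conjL_coeff, HahnSeries.coeff_one, apply_ite (starRingEnd ℂ)]

lemma single_one_mul_coeff (N : ℤ) (x : LaurentSeries ℂ) (m : ℤ) :
    (HahnSeries.single N (1 : ℂ) * x).coeff m = x.coeff (m - N) := by
  have h := HahnSeries.coeff_single_mul_add (r := (1 : ℂ)) (x := x) (a := m - N) (b := N)
  rw [show m - N + N = m by ring] at h
  rw [h, one_mul]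

lemma conjL_single_one_mul (N : ℤ) (x : LaurentSeries ℂ) :
    conjL (HahnSeries.single N (1 : ℂ) * x) = HahnSeries.single N (1 : ℂ) * conjL x := by
  apply HahnSeries.coeff_injective
  funext m
  rw [conjL_coeff, single_one_mul_coeff, single_one_mul_coeff, conjL_coeff]

lemma order_conjL (x : LaurentSeries ℂ) : (conjL x).order = x.order := by
  rcases eq_or_ne x 0 with rfl | hx
  · rw [conjL_zero]
  · apply le_antisymm
    · apply HahnSeries.order_le_of_coeff_ne_zero
      rw [conjL_coeff]
      simpa using (HahnSeries.coeff_order_eq_zero.not.mpr hx)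
    · apply HahnSeries.order_le_of_coeff_ne_zero
      have h := (HahnSeries.coeff_order_eq_zero.not.mpr (conjL_ne_zero hx))
      rw [conjL_coeff] at h
      simpa using h

lemma two_coeff (m : ℤ) :
    ((2 : LaurentSeries ℂ)).coeff m = if m = 0 then 2 else 0 := by
  have : (2 : LaurentSeries ℂ) = HahnSeries.single 0 (2 : ℂ) := by
    have := map_ofNat (HahnSeries.C : ℂ →+* LaurentSeries ℂ) 2
    rw [← this, HahnSeries.C_apply]
  rw [this, HahnSeries.coeff_single]
  split <;> rfl

section Alg

variable {A : Type*} [Ring A] [Algebra (LaurentSeries ℂ) A] [StarRing A]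
  (hsm : ∀ (c : LaurentSeries ℂ) (a : A), star (c • a) = conjL c • star a)
  (ω : A →ₗ[LaurentSeries ℂ] LaurentSeries ℂ)

include hsm in
lemma expand (f g : A) (c : LaurentSeries ℂ) :
    ω (star (f + c • g) * (f + c • g)) =
      ω (star f * f) + c * ω (star f * g) + conjL c * ω (star g * f)
        + (conjL c * c) * ω (star g * g) := by
  rw [star_add, hsm]
  simp only [add_mul, mul_add, smul_mul_assoc, mul_smul_comm, smul_smul,
    map_add, map_smul, smul_eq_mul]
  ring

variable (hpos : ∀ f : A, IsRealNonneg (ω (star f * f)))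

include hsm hpos in
lemma symm_aux (f g : A) : ω (star g * f) = conjL (ω (star f * g)) := by
  apply HahnSeries.coeff_injective
  funext m
  rw [conjL_coeff]
  set u := (ω (star f * g)).coeff m with hu
  set v := (ω (star g * f)).coeff m with hv
  -- from f + g
  have h1 : ((ω (star (f + (1 : LaurentSeries ℂ) • g) * (f + (1 : LaurentSeries ℂ) • g))).coeff m).im = 0 :=
    (hpos _).1 m
  rw [expand hsm ω f g 1] at h1
  rw [conjL_one] at h1
  simp only [one_mul, HahnSeries.coeff_add] at h1
  have hff : ((ω (star f * f)).coeff m).im = 0 := (hpos f).1 m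
  have hgg : ((ω (star g * g)).coeff m).im = 0 := (hpos g).1 m
  rw [Complex.add_im, Complex.add_im, Complex.add_im, hff, hgg, ← hu, ← hv] at h1
  -- from f + I g
  set c : LaurentSeries ℂ := HahnSeries.single 0 Complex.I with hc
  have hcconj : conjL c = HahnSeries.single 0 (-Complex.I) := by
    apply HahnSeries.coeff_injective
    funext k
    simp only [conjL_coeff, hc, HahnSeries.coeff_single]
    split <;> simp [Complex.conj_I]
  have hcc : conjL c * c = 1 := by
    rw [hcconj, hc, HahnSeries.single_mul_single]
    apply HahnSeries.coeff_injective
    funext k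
    rw [HahnSeries.coeff_single, HahnSeries.coeff_one]
    simp [Complex.I_mul_I]
  have h2 : ((ω (star (f + c • g) * (f + c • g))).coeff m).im = 0 := (hpos _).1 m
  rw [expand hsm ω f g c, hcc, hcconj, hc, one_mul] at h2
  simp only [HahnSeries.coeff_add, HahnSeries.coeff_single_zero_mul] at h2
  rw [Complex.add_im, Complex.add_im, Complex.add_im, hff, hgg, ← hu, ← hv] at h2
  simp only [Complex.mul_im, Complex.I_re, Complex.I_im, Complex.neg_re, Complex.neg_im,
    zero_mul, one_mul, zero_add] at h2
  -- conclude
  apply Complex.ext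
  · simp only [Complex.conj_re]; linarith
  · simp only [Complex.conj_im]; linarith

include hsm hpos in
lemma cs_zero (f g : A) (hf : ω (star f * f) = 0) : ω (star f * g) = 0 := by
  by_contra ha
  set a := ω (star f * g) with haa
  have hb : ω (star g * f) = conjL a := symm_aux hsm ω hpos f g
  set B := ω (star g * g) with hB
  -- choose N
  set N : ℤ := 1 + max 0 (-B.order) with hNdef
  have hmax1 : (0 : ℤ) ≤ max 0 (-B.order) := le_max_left _ _
  have hmax2 : -B.order ≤ max 0 (-B.order) := le_max_right _ _
  have hN1 : 0 < N := by omega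
  have hN2 : ∀ m : ℤ, m ≤ 0 → m - N < B.order := by intro m hm; omega
  set t : LaurentSeries ℂ := HahnSeries.single N (1 : ℂ) with ht
  set c : LaurentSeries ℂ := -(t * conjL a) with hcdef
  have hconjc : conjL c = -(t * a) := by
    rw [hcdef, conjL_neg, ht, conjL_single_one_mul, conjL_conjL]
  set α := conjL a * a with hα
  set u : LaurentSeries ℂ := -2 + t * B with hu
  have hEeq : ω (star (f + c • g) * (f + c • g)) = (t * α) * u := by
    rw [expand hsm ω f g c, hf, hb, hconjc, hcdef, hu, hα]
    ring
  -- coefficients of u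
  have htB : ∀ m : ℤ, m ≤ 0 → (t * B).coeff m = 0 := by
    intro m hm
    rw [ht, single_one_mul_coeff]
    rcases eq_or_ne B 0 with hB0 | hB0
    · rw [hB0]; simp
    · exact HahnSeries.coeff_eq_zero_of_lt_order (hN2 m hm)
  have hu0 : u.coeff 0 = -2 := by
    rw [hu, HahnSeries.coeff_add, HahnSeries.coeff_neg, two_coeff, htB 0 le_rfl]
    simp
  have huneg : ∀ m : ℤ, m < 0 → u.coeff m = 0 := by
    intro m hm
    rw [hu, HahnSeries.coeff_add, HahnSeries.coeff_neg, two_coeff, htB m hm.le]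
    simp [hm.ne]
  have hune : u ≠ 0 := by
    intro h
    rw [h] at hu0
    simp at hu0
  have huord : u.order = 0 := by
    apply le_antisymm
    · apply HahnSeries.order_le_of_coeff_ne_zero
      rw [hu0]; norm_num
    · by_contra h
      push_neg at h
      exact (HahnSeries.coeff_order_eq_zero.not.mpr hune) (huneg _ h)
  have htne : t ≠ 0 := HahnSeries.single_ne_zero one_ne_zero
  have hαne : α ≠ 0 := mul_ne_zero (conjL_ne_zero ha) ha
  have htαne : t * α ≠ 0 := mul_ne_zero htne hαne
  set E := ω (star (f + c • g) * (f + c • g)) with hE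
  have hEne : E ≠ 0 := by rw [hEeq]; exact mul_ne_zero htαne hune
  have hEord : E.order = (t * α).order + u.order := by
    rw [hEeq]; exact HahnSeries.order_mul htαne hune
  have hlead : E.coeff E.order = (t * α).leadingCoeff * u.leadingCoeff := by
    rw [hEord, hEeq]; exact HahnSeries.coeff_mul_order_add_order _ _
  have hulead : u.leadingCoeff = -2 := by
    rw [HahnSeries.leadingCoeff_eq, huord, hu0]
  have htαlead : (t * α).leadingCoeff = α.leadingCoeff := by
    rw [HahnSeries.leadingCoeff_eq, HahnSeries.order_mul htne hαne,
      HahnSeries.coeff_mul_order_add_order, ht, HahnSeries.leadingCoeff_of_single, one_mul]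
  have hαlead : α.leadingCoeff =
      (starRingEnd ℂ) (a.coeff a.order) * a.coeff a.order := by
    rw [HahnSeries.leadingCoeff_eq, HahnSeries.order_mul (conjL_ne_zero ha) ha, hα,
      HahnSeries.coeff_mul_order_add_order, HahnSeries.leadingCoeff_eq,
      HahnSeries.leadingCoeff_eq, order_conjL, conjL_coeff]
  -- positivity contradiction
  have hEre : (E.coeff E.order).re < 0 := by
    rw [hlead, htαlead, hαlead, hulead]
    have hz : a.coeff a.order ≠ 0 := (HahnSeries.coeff_order_eq_zero.not.mpr ha)
    have : (starRingEnd ℂ) (a.coeff a.order) * a.coeff a.order = (Complex.normSq (a.coeff a.order) : ℂ) := by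
      rw [Complex.normSq_eq_conj_mul_self]
    rw [this]
    have hpos' : 0 < Complex.normSq (a.coeff a.order) := Complex.normSq_pos.2 hz
    have hre : ((Complex.normSq (a.coeff a.order) : ℂ) * -2).re
        = -2 * Complex.normSq (a.coeff a.order) := by
      have : (Complex.normSq (a.coeff a.order) : ℂ) * -2
          = ((-2 * Complex.normSq (a.coeff a.order) : ℝ) : ℂ) := by push_cast; ring
      rw [this, Complex.ofReal_re]
    rw [hre]
    linarith
  rcases (hpos (f + c • g)).2 with h0 | hgt
  · rw [← hE] at h0
    exact hEne h0
  · rw [← hE] at hgt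
    linarith

end Alg

end GNSAux

/-- On the GNS space `H_ω = A ⧸ J_ω` (where `J_ω` is the Gel'fand ideal, given as a
submodule), the formula `⟨Ψ_f, Ψ_g⟩ := ω(f̄*g)` is well defined (independent of the
representatives), conjugate-symmetric, `ℂ((λ))`-linear in the second argument, and
positive definite. -/
theorem gns_inner_product_well_defined
    {A : Type*} [Ring A] [Algebra (LaurentSeries ℂ) A] [StarRing A]
    (hsm : ∀ (c : LaurentSeries ℂ) (a : A), star (c • a) = conjL c • star a)
    (ω : A →ₗ[LaurentSeries ℂ] LaurentSeries ℂ)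
    (hpos : ∀ f : A, IsRealNonneg (ω (star f * f)))
    (J : Submodule (LaurentSeries ℂ) A)
    (hJ : ∀ f : A, f ∈ J ↔ ω (star f * f) = 0) :
    -- well defined on the quotient H_ω = A ⧸ J
    (∀ f f' g g' : A,
        (Submodule.Quotient.mk f : A ⧸ J) = Submodule.Quotient.mk f' →
        (Submodule.Quotient.mk g : A ⧸ J) = Submodule.Quotient.mk g' →
        ω (star f * g) = ω (star f' * g')) ∧
    -- conjugate symmetric
    (∀ f g : A, ω (star f * g) = conjL (ω (star g * f))) ∧
    -- ℂ((λ))-linear in the second argument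
    (∀ (f g h : A) (c : LaurentSeries ℂ),
        ω (star f * (c • g + h)) = c * ω (star f * g) + ω (star f * h)) ∧
    -- positive definite
    (∀ f : A, IsRealNonneg (ω (star f * f)) ∧
        (ω (star f * f) = 0 ↔ (Submodule.Quotient.mk f : A ⧸ J) = 0)) := by
  refine ⟨?_, ?_, ?_, ?_⟩
  · intro f f' g g' hf hg
    rw [Submodule.Quotient.eq] at hf hg
    have h1 : ω (star (f - f') * g) = 0 :=
      GNSAux.cs_zero hsm ω hpos _ _ ((hJ _).1 hf)
    have h2 : ω (star f' * (g - g')) = 0 := by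
      rw [GNSAux.symm_aux hsm ω hpos _ _,
        GNSAux.cs_zero hsm ω hpos _ _ ((hJ _).1 hg), GNSAux.conjL_zero]
    have key : ω (star f * g) - ω (star f' * g') =
        ω (star (f - f') * g) + ω (star f' * (g - g')) := by
      rw [star_sub, sub_mul, mul_sub, map_sub, map_sub]
      ring
    rw [h1, h2, add_zero] at key
    exact sub_eq_zero.mp key
  · intro f g
    exact GNSAux.symm_aux hsm ω hpos g f
  · intro f g h c
    rw [mul_add, mul_smul_comm, map_add, map_smul, smul_eq_mul]
  · intro f
    refine ⟨hpos f, ?_⟩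
    rw [Submodule.Quotient.mk_eq_zero]
    exact (hJ f).symm
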